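/- Let M be a minimal node multiway cut of (G,T) with associated components C₁,…,C_k (C_i containing t_i), let 1 ≤ i ≤ k and v ∈ M with N(v) ∩ (T \ {t_i}) = ∅. Then M^{i,v} = (M \ {v}) ∪ (⋃_{j ≠ i} N(v) ∩ C_j) is a node multiway cut of (G,T). -/

import Mathlib

open SimpleGraph Set

variable {V : Type*}

/-- `s` and `t` are separated in `G - M` (the graph obtained by deleting the vertices of `M`). -/
def SepSets (G : SimpleGraph V) (M : Set V) (s t : V) : Prop :=
  ∀ (hs : s ∈ (Mᶜ : Set V)) (ht : t ∈ (Mᶜ : Set V)),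
    ¬ (G.induce (Mᶜ : Set V)).Reachable ⟨s, hs⟩ ⟨t, ht⟩

/-- `M` is a node multiway cut of `(G, T)`: a set of non-terminal vertices whose removal
disconnects every pair of distinct terminals. -/
def IsNodeMultiwayCut (G : SimpleGraph V) (T : Set V) (M : Set V) : Prop :=
  M ⊆ Tᶜ ∧ ∀ s ∈ T, ∀ u ∈ T, s ≠ u → SepSets G M s u

/-- `M` is a minimal node multiway cut of `(G, T)`. -/
def IsMinNodeMultiwayCut (G : SimpleGraph V) (T : Set V) (M : Set V) : Prop :=
  IsNodeMultiwayCut G T M ∧ ∀ M' ⊂ M, ¬ IsNodeMultiwayCut G T M'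

/-- `C` is (the vertex set of) a connected component of `G - M`. -/
def IsCompOf (G : SimpleGraph V) (M : Set V) (C : Set V) : Prop :=
  ∃ c : (G.induce (Mᶜ : Set V)).ConnectedComponent, C = Subtype.val '' c.supp

lemma reach_transfer {G : SimpleGraph V} {A B : Set V} :
    ∀ {x y : A} (W : (G.induce A).Walk x y),
      (∀ z ∈ W.support, (z : V) ∈ B) → ∀ (hx : (x:V) ∈ B) (hy : (y:V) ∈ B),
      (G.induce B).Reachable ⟨x, hx⟩ ⟨y, hy⟩ := by
  intro x y W
  induction W with
  | nil => intro _ _ _; exact Reachable.refl _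
  | @cons x w y h p ih =>
    intro hsup hx hy
    have hw : (w:V) ∈ B := hsup w (by simp)
    have hadj : (G.induce B).Adj ⟨x, hx⟩ ⟨w, hw⟩ := h
    exact hadj.reachable.trans (ih (fun z hz => hsup z (by simp [hz])) hw hy)

/-- Let `M` be a minimal node multiway cut of `(G, T)` with components
`C₁, …, C_k` (`t_i ∈ C_i`), and let `v ∈ M` with `N(v) ∩ (T \ {t_i}) = ∅`. Then
`M^{i,v} = (M \ {v}) ∪ (⋃_{j ≠ i} N(v) ∩ C_j)` is a node multiway cut of `(G, T)`. -/
theorem shifted_set_is_multiway_cut (G : SimpleGraph V) (k : ℕ) (t : Fin k → V)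
    (ht : Function.Injective t) (M : Set V)
    (hM : IsMinNodeMultiwayCut G (Set.range t) M)
    (C : Fin k → Set V) (hC : ∀ i, IsCompOf G M (C i) ∧ t i ∈ C i)
    (i : Fin k) (v : V) (hv : v ∈ M)
    (hNv : ∀ u : V, G.Adj v u → u ∈ Set.range t → u = t i) :
    IsNodeMultiwayCut G (Set.range t)
      ((M \ {v}) ∪ {u | ∃ j : Fin k, j ≠ i ∧ u ∈ C j ∧ G.Adj v u}) := by
  classical
  obtain ⟨⟨hMT, hMsep⟩, _hmin⟩ := hM
  set M' : Set V := (M \ {v}) ∪ {u | ∃ j : Fin k, j ≠ i ∧ u ∈ C j ∧ G.Adj v u} with hM'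
  -- basic facts
  have htM : ∀ j : Fin k, t j ∈ (Mᶜ : Set V) := fun j h => hMT h ⟨j, rfl⟩
  have hCM : ∀ j, C j ⊆ (Mᶜ : Set V) := by
    intro j x hx
    obtain ⟨c, hc⟩ := (hC j).1
    rw [hc] at hx
    obtain ⟨y, _, rfl⟩ := hx
    exact y.2
  -- if x ∈ C j and x ∉ M, then x is reachable from t j in G - M
  have hcomp : ∀ j : Fin k, ∀ x ∈ C j, ∀ (hx : x ∈ (Mᶜ : Set V)),
      (G.induce (Mᶜ : Set V)).Reachable ⟨x, hx⟩ ⟨t j, htM j⟩ := by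
    intro j x hxC hx
    obtain ⟨c, hc⟩ := (hC j).1
    have h1 : (⟨x, hx⟩ : (Mᶜ : Set V)) ∈ c.supp := by
      rw [hc] at hxC
      obtain ⟨y, hy, hyx⟩ := hxC
      have : (⟨x, hx⟩ : (Mᶜ : Set V)) = y := Subtype.ext hyx.symm
      rw [this]; exact hy
    have h2 : (⟨t j, htM j⟩ : (Mᶜ : Set V)) ∈ c.supp := by
      have := (hC j).2
      rw [hc] at this
      obtain ⟨y, hy, hyx⟩ := this
      have : (⟨t j, htM j⟩ : (Mᶜ : Set V)) = y := Subtype.ext hyx.symm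
      rw [this]; exact hy
    rw [ConnectedComponent.mem_supp_iff] at h1 h2
    exact ConnectedComponent.exact (h1.trans h2.symm)
  -- conversely, anything reachable from t j in G - M that lies in C-land:
  have hmemC : ∀ j : Fin k, ∀ x, ∀ (hx : x ∈ (Mᶜ : Set V)),
      (G.induce (Mᶜ : Set V)).Reachable ⟨x, hx⟩ ⟨t j, htM j⟩ → x ∈ C j := by
    intro j x hx hr
    obtain ⟨c, hc⟩ := (hC j).1
    have h2 : (⟨t j, htM j⟩ : (Mᶜ : Set V)) ∈ c.supp := by
      have := (hC j).2
      rw [hc] at this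
      obtain ⟨y, hy, hyx⟩ := this
      have : (⟨t j, htM j⟩ : (Mᶜ : Set V)) = y := Subtype.ext hyx.symm
      rw [this]; exact hy
    rw [ConnectedComponent.mem_supp_iff] at h2
    have h1 : (⟨x, hx⟩ : (Mᶜ : Set V)) ∈ c.supp := by
      rw [ConnectedComponent.mem_supp_iff, ← h2]
      exact ConnectedComponent.sound hr
    rw [hc]
    exact ⟨⟨x, hx⟩, h1, rfl⟩
  constructor
  · -- M' ⊆ Tᶜ
    rintro x (⟨hxM, _⟩ | ⟨j, hji, hxC, hadj⟩)
    · exact hMT hxM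
    · intro hxT
      have hxi : x = t i := hNv x hadj hxT
      subst hxi
      have h1 : t i ∈ (Mᶜ : Set V) := hCM j hxC
      have hr := hcomp j (t i) hxC h1
      exact hMsep (t i) ⟨i, rfl⟩ (t j) ⟨j, rfl⟩
        (fun h => hji (ht h).symm) h1 (htM j) hr
  · -- separation
    rintro s ⟨a, rfl⟩ u ⟨b, rfl⟩ hne hsa hsb hreach
    have hab : a ≠ b := fun h => hne (by rw [h])
    -- x ∈ M'ᶜ, x ≠ v ⇒ x ∉ M
    have hMsub : ∀ x : V, x ∈ (M'ᶜ : Set V) → x ≠ v → x ∈ (Mᶜ : Set V) := by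
      intro x hx hxv hxM
      exact hx (Or.inl ⟨hxM, hxv⟩)
    have hvM' : v ∈ (M'ᶜ : Set V) := by
      rintro (⟨_, hvv⟩ | ⟨j, _, hvC, _⟩)
      · exact hvv rfl
      · exact hCM j hvC hv
    set vv : (M'ᶜ : Set V) := ⟨v, hvM'⟩ with hvv
    -- key claim: a neighbor-walk to t c avoiding v forces c = i
    have key : ∀ (c : Fin k) (hc' : t c ∈ (M'ᶜ : Set V)) (u : (M'ᶜ : Set V))
        (hadj : (G.induce (M'ᶜ : Set V)).Adj vv u)
        (q : (G.induce (M'ᶜ : Set V)).Walk u ⟨t c, hc'⟩), vv ∉ q.support → c = i := by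
      intro c hc' u hadj q hvq
      by_contra hci
      have hsupq : ∀ z ∈ q.support, (z : V) ∈ (Mᶜ : Set V) := by
        intro z hz
        refine hMsub z z.2 ?_
        intro hzv
        exact hvq (by rwa [show z = vv from Subtype.ext hzv] at hz)
      have huM : (u : V) ∈ (Mᶜ : Set V) := hsupq u q.start_mem_support
      have hr := reach_transfer q hsupq huM (htM c)
      have huC : (u : V) ∈ C c := hmemC c u huM hr
      have hGadj : G.Adj v u := hadj
      exact u.2 (Or.inr ⟨c, fun h => hci h, huC, hGadj⟩)
    obtain ⟨W⟩ := hreach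
    set P := W.bypass with hP
    have hPpath : P.IsPath := W.bypass_isPath
    by_cases hvP : vv ∈ P.support
    · -- decompose at v
      have hcount := P.count_support_takeUntil_eq_one hvP
      set W1 := P.takeUntil vv hvP with hW1
      set W2 := P.dropUntil vv hvP with hW2
      -- a = i from W1.reverse
      have hva : vv ≠ (⟨t a, hsa⟩ : (M'ᶜ : Set V)) := by
        intro h
        exact htM a (by rw [← show vv.1 = t a from congrArg Subtype.val h]; exact hv)
      obtain ⟨u1, hadj1, q1, hq1⟩ := Walk.exists_eq_cons_of_ne hva W1.reverse
      have hvq1 : vv ∉ q1.support := by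
        have : W1.reverse.support.count vv = 1 := by
          rw [Walk.support_reverse, List.count_reverse]; convert hcount using 2; exact lawful_beq_subsingleton _ _
        rw [hq1, Walk.support_cons] at this
        exact List.count_eq_zero.mp (by simpa using this)
      have ha : a = i := key a hsa u1 hadj1 q1 hvq1
      -- b = i from W2
      have hvb : vv ≠ (⟨t b, hsb⟩ : (M'ᶜ : Set V)) := by
        intro h
        exact htM b (by rw [← show vv.1 = t b from congrArg Subtype.val h]; exact hv)
      obtain ⟨u2, hadj2, q2, hq2⟩ := Walk.exists_eq_cons_of_ne hvb W2
      have hvq2 : vv ∉ q2.support := by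
        have hnd : P.support.Nodup := hPpath.support_nodup
        have hspec : W1.append W2 = P := P.take_spec hvP
        have : P.support = W1.support ++ W2.support.tail := by
          rw [← hspec, Walk.support_append]
        rw [this] at hnd
        have hvW1 : vv ∈ W1.support := W1.end_mem_support
        have hvtail : vv ∉ W2.support.tail := by
          intro hmem
          exact (List.disjoint_of_nodup_append hnd) hvW1 hmem
        rw [hq2, Walk.support_cons] at hvtail
        simpa using hvtail
      have hb : b = i := key b hsb u2 hadj2 q2 hvq2
      exact hab (ha.trans hb.symm)
    · -- walk avoids v entirely: contradicts M being a cut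
      have hsup : ∀ z ∈ P.support, (z : V) ∈ (Mᶜ : Set V) := by
        intro z hz
        refine hMsub z z.2 ?_
        intro hzv
        exact hvP (by rwa [show z = vv from Subtype.ext hzv] at hz)
      have hr := reach_transfer P hsup (htM a) (htM b)
      exact hMsep (t a) ⟨a, rfl⟩ (t b) ⟨b, rfl⟩ hne (htM a) (htM b) hr
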